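/- Let M ∈ ℕ, s ∈ [1,2], q ∈ [s,∞), and let ξ_1,...,ξ_M be i.i.d. integrable real random variables on a probability space (Ω,F,P) with E[|ξ_1|^q] < ∞. Then there is a constant Θ_{q,s} (depending only on q and s, not on M or the ξ_j) such that E[ |E[ξ_1] - (1/M) Σ_{j=1}^M ξ_j|^q ]^{1/q} ≤ (Θ_{q,s}/M^{1-1/s}) · E[ |ξ_1 - E[ξ_1]|^q ]^{1/q}. -/

import Mathlib

open MeasureTheory ProbabilityTheory Real

section auxlemmas


lemma lemB {q : ℝ} (hq : 1 ≤ q) : ∃ C : ℝ, 0 < C ∧ ∀ t : ℝ, |t| ≤ 1/2 →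
    (1+t) ^ q ≤ 1 + q * t + C * |t| ^ (2:ℝ) := by
  have hq0 : (0:ℝ) < q := lt_of_lt_of_le one_pos hq
  set C : ℝ := q^2 * ((2:ℝ) ^ q + 2) with hC
  have h2q : (0:ℝ) < (2:ℝ) ^ q := Real.rpow_pos_of_pos two_pos q
  have hCpos : 0 < C := by positivity
  refine ⟨C, hCpos, ?_⟩
  -- second derivative bound: for |t| ≤ 1/2, q*(q-1)*(1+t)^(q-2) ≤ 2*C
  have hsder : ∀ t : ℝ, |t| ≤ 1/2 → q * (q-1) * (1+t) ^ (q-2) ≤ 2 * C := by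
    intro t ht
    have h1 : (1:ℝ)/2 ≤ 1 + t := by cases' abs_le.1 ht with h _; linarith
    have h2 : 1 + t ≤ 2 := by cases' abs_le.1 ht with _ h; linarith
    have hpos : (0:ℝ) < 1 + t := by linarith
    have hb : (1+t) ^ (q-2) ≤ (2:ℝ) ^ q + 2 := by
      rcases le_or_gt 2 q with h | h
      · have : (1+t) ^ (q-2) ≤ (2:ℝ) ^ (q-2) :=
          Real.rpow_le_rpow (le_of_lt hpos) h2 (by linarith)
        have h2' : (2:ℝ) ^ (q-2) ≤ (2:ℝ) ^ q :=
          Real.rpow_le_rpow_of_exponent_le one_le_two (by linarith)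
        linarith
      · have : (1+t) ^ (q-2) ≤ ((1:ℝ)/2) ^ (q-2) :=
          Real.rpow_le_rpow_of_nonpos one_half_pos h1 (by linarith)
        have he : ((1:ℝ)/2) ^ (q-2) = (2:ℝ) ^ (2-q) := by
          rw [one_div, ← Real.rpow_neg_one (2:ℝ), ← Real.rpow_mul (by norm_num : (0:ℝ) ≤ 2)]
          ring_nf
        have h2' : (2:ℝ) ^ (2-q) ≤ (2:ℝ) ^ (1:ℝ) :=
          Real.rpow_le_rpow_of_exponent_le one_le_two (by linarith)
        rw [Real.rpow_one] at h2'
        linarith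
    have hqq : q * (q-1) ≤ q^2 := by nlinarith
    have hnn : (0:ℝ) ≤ (1+t) ^ (q-2) := Real.rpow_nonneg (le_of_lt hpos) _
    calc q * (q-1) * (1+t) ^ (q-2) ≤ q^2 * ((2:ℝ)^q + 2) := by nlinarith
      _ ≤ 2 * C := by rw [hC]; nlinarith
  -- define G and derivatives
  set G : ℝ → ℝ := fun t => 1 + q * t + C * t^2 - (1+t) ^ q with hG
  set G' : ℝ → ℝ := fun t => q + C * (2*t) - q * (1+t) ^ (q-1) with hG'
  have hder : ∀ t : ℝ, 0 < 1 + t → HasDerivAt G (G' t) t := by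
    intro t ht
    have h1 : HasDerivAt (fun t : ℝ => (1+t) ^ q) (q * (1+t) ^ (q-1)) t := by
      have := (Real.hasDerivAt_rpow_const (x := 1+t) (p := q) (Or.inl (ne_of_gt ht))).comp t
        ((hasDerivAt_id t).const_add 1)
      simpa [Function.comp_def] using this
    have h2 : HasDerivAt (fun t : ℝ => 1 + q * t + C * t^2) (q + C * (2*t)) t := by
      have := (((hasDerivAt_id t).const_mul q).const_add 1).add
        (((hasDerivAt_pow 2 t)).const_mul C)
      simpa [mul_comm, Pi.add_def] using this
    simpa [hG, hG', Pi.sub_def] using h2.sub h1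
  have hder' : ∀ t : ℝ, 0 < 1 + t →
      HasDerivAt G' (C * 2 - q * ((q-1) * (1+t) ^ (q-2)) ) t := by
    intro t ht
    have h1 : HasDerivAt (fun t : ℝ => (1+t) ^ (q-1)) ((q-1) * (1+t) ^ (q-2)) t := by
      have h0 := (Real.hasDerivAt_rpow_const (x := 1+t) (p := q-1) (Or.inl (ne_of_gt ht))).comp t
        ((hasDerivAt_id t).const_add 1)
      have h12 : q - 1 - 1 = q - 2 := by ring
      simpa [h12, Function.comp_def] using h0
    have h2 : HasDerivAt (fun t : ℝ => q + C * (2*t)) (C * 2) t := by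
      have := ((hasDerivAt_id t).const_mul (2:ℝ)).const_mul C
      simpa [mul_comm, mul_assoc] using (this.const_add q)
    simpa [hG', Pi.sub_def] using h2.sub (h1.const_mul q)
  have hG'0 : G' 0 = 0 := by simp [hG']
  have hG0 : G 0 = 0 := by simp [hG]
  -- G' is monotone on Icc (-(1/2)) (1/2)
  have hmem : ∀ t : ℝ, t ∈ Set.Icc (-(1/2):ℝ) (1/2) → 0 < 1 + t := by
    intro t ht; have := ht.1; simp at this ⊢; linarith
  have hmono : MonotoneOn G' (Set.Icc (-(1/2):ℝ) (1/2)) := by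
    apply monotoneOn_of_deriv_nonneg (convex_Icc _ _)
    · intro t ht
      exact ((hder' t (hmem t ht)).continuousAt).continuousWithinAt
    · intro t ht
      rw [interior_Icc] at ht
      exact ((hder' t (hmem t (Set.mem_Icc_of_Ioo ht))).differentiableAt).differentiableWithinAt
    · intro t ht
      rw [interior_Icc] at ht
      have ht' := Set.mem_Icc_of_Ioo ht
      rw [(hder' t (hmem t ht')).deriv]
      have := hsder t (abs_le.2 ⟨ht'.1, ht'.2⟩)
      nlinarith [this]
  intro t ht
  have htmem : t ∈ Set.Icc (-(1/2):ℝ) (1/2) := Set.mem_Icc.2 (abs_le.1 ht)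
  have h0mem : (0:ℝ) ∈ Set.Icc (-(1/2):ℝ) (1/2) := by constructor <;> norm_num
  -- show 0 ≤ G t by monotonicity considerations
  have key : 0 ≤ G t := by
    rcases le_or_gt 0 t with h | h
    · have hGmono : MonotoneOn G (Set.Icc (0:ℝ) (1/2)) := by
        apply monotoneOn_of_deriv_nonneg (convex_Icc _ _)
        · intro u hu
          have hu' : 0 < 1 + u := by have := hu.1; linarith
          exact ((hder u hu').continuousAt).continuousWithinAt
        · intro u hu
          rw [interior_Icc] at hu
          have hu' : 0 < 1 + u := by have := hu.1; linarith
          exact ((hder u hu').differentiableAt).differentiableWithinAt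
        · intro u hu
          rw [interior_Icc] at hu
          have hu' : 0 < 1 + u := by have := hu.1; linarith
          rw [(hder u hu').deriv]
          have : G' 0 ≤ G' u := hmono h0mem
            (Set.mem_Icc.2 ⟨by linarith [hu.1], le_of_lt hu.2⟩) (le_of_lt hu.1)
          rw [hG'0] at this; exact this
      have := hGmono (Set.mem_Icc.2 ⟨le_refl 0, by norm_num⟩)
        (Set.mem_Icc.2 ⟨h, (abs_le.1 ht).2⟩) h
      rw [hG0] at this; exact this
    · have hGanti : AntitoneOn G (Set.Icc (-(1/2):ℝ) 0) := by
        apply antitoneOn_of_deriv_nonpos (convex_Icc _ _)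
        · intro u hu
          have hu' : 0 < 1 + u := by have := hu.1; linarith
          exact ((hder u hu').continuousAt).continuousWithinAt
        · intro u hu
          rw [interior_Icc] at hu
          have hu' : 0 < 1 + u := by have := hu.1; linarith
          exact ((hder u hu').differentiableAt).differentiableWithinAt
        · intro u hu
          rw [interior_Icc] at hu
          have hu' : 0 < 1 + u := by have := hu.1; linarith
          rw [(hder u hu').deriv]
          have : G' u ≤ G' 0 := hmono
            (Set.mem_Icc.2 ⟨le_of_lt hu.1, by linarith [hu.2]⟩) h0mem (le_of_lt hu.2)
          rw [hG'0] at this; exact this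
      have := hGanti (Set.mem_Icc.2 ⟨(abs_le.1 ht).1, le_of_lt h⟩)
        (Set.mem_Icc.2 ⟨by norm_num, le_refl 0⟩) (le_of_lt h)
      rw [hG0] at this; exact this
  have habs : |t| ^ (2:ℝ) = t^2 := by
    rw [show ((2:ℝ)) = ((2:ℕ):ℝ) by norm_num, Real.rpow_natCast, sq_abs]
  rw [habs]
  simp only [hG] at key
  linarith [key]



lemma lemA {q : ℝ} (hq : 1 ≤ q) : ∃ C : ℝ, 0 < C ∧ ∀ a b : ℝ,
    |a+b| ^ q ≤ |a| ^ q + (q * a * |a| ^ (q-2)) * b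
      + C * (|a| ^ (q - min q 2) * |b| ^ (min q 2) + |b| ^ q) := by
  obtain ⟨C₀, hC₀, hB⟩ := lemB hq
  set r : ℝ := min q 2 with hr
  have hr1 : 1 ≤ r := le_min hq one_le_two
  have hr2 : r ≤ 2 := min_le_right _ _
  have hrq : r ≤ q := min_le_left _ _
  have h3q : (0:ℝ) < (3:ℝ) ^ q := Real.rpow_pos_of_pos (by norm_num) q
  have h2q : (0:ℝ) < (2:ℝ) ^ q := Real.rpow_pos_of_pos (by norm_num) q
  refine ⟨C₀ + 3 ^ q + q * 2 ^ q + 1, by positivity, ?_⟩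
  intro a b
  set C : ℝ := C₀ + 3 ^ q + q * 2 ^ q + 1 with hC
  have hterm_nonneg : 0 ≤ |a| ^ (q - r) * |b| ^ r :=
    mul_nonneg (Real.rpow_nonneg (abs_nonneg a) _) (Real.rpow_nonneg (abs_nonneg b) _)
  have hbq_nonneg : 0 ≤ |b| ^ q := Real.rpow_nonneg (abs_nonneg b) _
  have haq_nonneg : 0 ≤ |a| ^ q := Real.rpow_nonneg (abs_nonneg a) _
  rcases le_or_gt |a| (2 * |b|) with hcase | hcase
  · -- |a| ≤ 2|b|
    have hLHS : |a+b| ^ q ≤ 3 ^ q * |b| ^ q := by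
      have h1 : |a+b| ≤ 3 * |b| := by
        calc |a+b| ≤ |a| + |b| := abs_add_le a b
          _ ≤ 3 * |b| := by linarith
      calc |a+b| ^ q ≤ (3 * |b|) ^ q := Real.rpow_le_rpow (abs_nonneg _) h1 (by linarith)
        _ = 3 ^ q * |b| ^ q := Real.mul_rpow (by norm_num) (abs_nonneg b)
    have hmid : -(q * (2:ℝ)^q * |b| ^ q) ≤ (q * a * |a| ^ (q-2)) * b := by
      rcases eq_or_ne a 0 with ha | ha
      · simp [ha]; positivity
      · have habs : |q * a * |a| ^ (q-2) * b| = q * |a| ^ (q-1) * |b| := by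
          rw [abs_mul, abs_mul, abs_mul]
          rw [abs_of_nonneg (by linarith : (0:ℝ) ≤ q)]
          rw [abs_of_nonneg (Real.rpow_nonneg (abs_nonneg a) _)]
          have : |a| * |a| ^ (q-2) = |a| ^ (q-1) := by
            rw [mul_comm, ← Real.rpow_add_one (abs_ne_zero.mpr ha) (q-2)]
            congr 1; ring
          rw [mul_assoc q, this]
        have h1 : q * |a| ^ (q-1) * |b| ≤ q * (2:ℝ)^q * |b| ^ q := by
          have hab : |a| ^ (q-1) ≤ (2 * |b|) ^ (q-1) :=
            Real.rpow_le_rpow (abs_nonneg a) hcase (by linarith)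
          have hbb : (2 * |b|) ^ (q-1) = 2 ^ (q-1) * |b| ^ (q-1) :=
            Real.mul_rpow (by norm_num) (abs_nonneg b)
          have h2 : (2:ℝ) ^ (q-1) ≤ 2 ^ q :=
            Real.rpow_le_rpow_of_exponent_le one_le_two (by linarith)
          have hb1 : |b| ^ (q-1) * |b| = |b| ^ q := by
            rcases eq_or_ne b 0 with hb | hb
            · simp [hb]; rw [Real.zero_rpow (by linarith : q ≠ 0)]
            · rw [← Real.rpow_add_one (abs_ne_zero.mpr hb) (q-1)]
              congr 1; ring

          calc q * |a| ^ (q-1) * |b| ≤ q * (2 ^ (q-1) * |b| ^ (q-1)) * |b| := by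
                have hq0 : (0:ℝ) ≤ q := by linarith
                rw [hbb] at hab
                exact mul_le_mul_of_nonneg_right (mul_le_mul_of_nonneg_left hab hq0) (abs_nonneg b)
            _ = q * 2 ^ (q-1) * (|b| ^ (q-1) * |b|) := by ring
            _ = q * 2 ^ (q-1) * |b| ^ q := by rw [hb1]
            _ ≤ q * 2 ^ q * |b| ^ q := by
                have hq0 : (0:ℝ) ≤ q := by linarith
                exact mul_le_mul_of_nonneg_right (mul_le_mul_of_nonneg_left h2 hq0) hbq_nonneg
        calc -(q * (2:ℝ)^q * |b| ^ q) ≤ -(q * |a| ^ (q-1) * |b|) := by linarith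
          _ ≤ q * a * |a| ^ (q-2) * b := by
            have := neg_abs_le (q * a * |a| ^ (q-2) * b)
            rw [habs] at this; linarith
    have hCpos : 0 < C := by rw [hC]; positivity
    have : C * (|a| ^ (q - r) * |b| ^ r + |b| ^ q) ≥ (3^q + q * 2^q) * |b|^q := by
      have hC1 : (3:ℝ)^q + q * 2^q ≤ C := by rw [hC]; linarith
      nlinarith [mul_nonneg (le_of_lt hCpos) hterm_nonneg,
        mul_le_mul_of_nonneg_right hC1 hbq_nonneg]
    nlinarith
  · -- 2|b| < |a|, so a ≠ 0
    have ha : a ≠ 0 := by intro h; rw [h] at hcase; simp at hcase; linarith [abs_nonneg b, hcase]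
    have hapos : 0 < |a| := abs_pos.2 ha
    set t : ℝ := b / a with ht
    have habst : |t| ≤ 1/2 := by
      rw [ht, abs_div]
      rw [div_le_iff₀ hapos]
      linarith
    have hb_eq : b = a * t := by rw [ht]; field_simp
    have habsb : |b| = |a| * |t| := by rw [hb_eq, abs_mul]
    have h1t : 0 < 1 + t := by cases' abs_le.1 habst with h _; linarith
    -- |a+b|^q = |a|^q * (1+t)^q
    have hLHS : |a+b| ^ q = |a| ^ q * (1+t) ^ q := by
      have : a + b = a * (1 + t) := by rw [hb_eq]; ring
      rw [this, abs_mul, abs_of_pos h1t, Real.mul_rpow (abs_nonneg a) (le_of_lt h1t)]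
    -- middle term = q * |a|^q * t
    have hmid : (q * a * |a| ^ (q-2)) * b = q * |a| ^ q * t := by
      rw [hb_eq]
      have : a * (a * t) = |a|^(2:ℝ) * t := by
        rw [show |a|^(2:ℝ) = |a|^(2:ℕ) by rw [← Real.rpow_natCast]; norm_num, sq_abs]; ring
      calc q * a * |a| ^ (q-2) * (a * t) = q * (a * (a * t)) * |a| ^ (q-2) := by ring
        _ = q * (|a|^(2:ℝ) * t) * |a| ^ (q-2) := by rw [this]
        _ = q * (|a|^(2:ℝ) * |a| ^ (q-2)) * t := by ring
        _ = q * |a| ^ q * t := by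
            rw [← Real.rpow_add hapos]
            have h2q2 : (2:ℝ) + (q-2) = q := by ring
            rw [h2q2]
    -- term
    have hterm : |a| ^ (q - r) * |b| ^ r = |a| ^ q * |t| ^ r := by
      rw [habsb, Real.mul_rpow (abs_nonneg a) (abs_nonneg t), ← mul_assoc,
        ← Real.rpow_add hapos]
      have hqr : q - r + r = q := by ring
      rw [hqr]
    have ht2r : |t| ^ (2:ℝ) ≤ |t| ^ r := by
      rcases eq_or_ne t 0 with h0 | h0
      · simp [h0]
        exact Real.rpow_nonneg le_rfl r
      · exact Real.rpow_le_rpow_of_exponent_ge (abs_pos.2 h0) (by linarith [abs_le.1 habst, abs_nonneg t]; ) hr2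
    have hkey := hB t habst
    have : |a+b| ^ q ≤ |a| ^ q + q * |a| ^ q * t + C₀ * (|a| ^ q * |t| ^ r) := by
      rw [hLHS]
      calc |a| ^ q * (1+t) ^ q ≤ |a| ^ q * (1 + q * t + C₀ * |t| ^ (2:ℝ)) :=
            mul_le_mul_of_nonneg_left hkey haq_nonneg
        _ ≤ |a| ^ q * (1 + q * t + C₀ * |t| ^ r) := by
            apply mul_le_mul_of_nonneg_left _ haq_nonneg
            nlinarith
        _ = |a| ^ q + q * |a| ^ q * t + C₀ * (|a| ^ q * |t| ^ r) := by ring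
    rw [hmid, hterm]
    have hCge : C₀ ≤ C := by rw [hC]; nlinarith
    nlinarith [mul_nonneg haq_nonneg (Real.rpow_nonneg (abs_nonneg t) r)]


variable {Ω : Type} [MeasurableSpace Ω] {μ : Measure Ω}

-- scalar: |a+b|^q ≤ 2^q * (|a|^q + |b|^q)
lemma sc_add {q : ℝ} (hq : 0 ≤ q) (a b : ℝ) :
    |a + b| ^ q ≤ 2 ^ q * (|a| ^ q + |b| ^ q) := by
  have h1 : |a + b| ≤ 2 * max |a| |b| := by
    calc |a+b| ≤ |a| + |b| := abs_add_le a b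
      _ ≤ 2 * max |a| |b| := by
        rcases max_cases |a| |b| with ⟨h, h'⟩ | ⟨h, h'⟩ <;> rw [h] <;> linarith
  calc |a+b| ^ q ≤ (2 * max |a| |b|) ^ q :=
        Real.rpow_le_rpow (abs_nonneg _) h1 hq
    _ = 2 ^ q * (max |a| |b|) ^ q :=
        Real.mul_rpow (by norm_num) (le_max_iff.2 (Or.inl (abs_nonneg a)))
    _ ≤ 2 ^ q * (|a| ^ q + |b| ^ q) := by
        have h2 : (max |a| |b|) ^ q ≤ |a| ^ q + |b| ^ q := by
          rcases max_cases |a| |b| with ⟨h, _⟩ | ⟨h, _⟩ <;> rw [h]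
          · nlinarith [Real.rpow_nonneg (abs_nonneg b) q]
          · nlinarith [Real.rpow_nonneg (abs_nonneg a) q]
        have : (0:ℝ) ≤ 2 ^ q := le_of_lt (Real.rpow_pos_of_pos two_pos q)
        nlinarith
-- scalar: p ≤ q → |a|^p ≤ 1 + |a|^q
lemma sc_mono {p q : ℝ} (hp : 0 ≤ p) (hpq : p ≤ q) (a : ℝ) :
    |a| ^ p ≤ 1 + |a| ^ q := by
  rcases le_or_gt |a| 1 with h | h
  · have : |a| ^ p ≤ 1 := Real.rpow_le_one (abs_nonneg a) h hp
    have := Real.rpow_nonneg (abs_nonneg a) q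
    linarith
  · have : |a| ^ p ≤ |a| ^ q := Real.rpow_le_rpow_of_exponent_le (le_of_lt h) hpq
    linarith

-- integrability of lower moments
lemma int_mono [IsProbabilityMeasure μ] {q p : ℝ} (hp : 0 ≤ p) (hpq : p ≤ q)
    {X : Ω → ℝ} (hX : Measurable X) (hXq : Integrable (fun ω => |X ω| ^ q) μ) :
    Integrable (fun ω => |X ω| ^ p) μ := by
  refine Integrable.mono' ((integrable_const 1).add hXq) ((hX.abs.pow_const p).aestronglyMeasurable) ?_
  filter_upwards with ω
  rw [Real.norm_eq_abs, abs_of_nonneg (Real.rpow_nonneg (abs_nonneg _) _)]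
  exact sc_mono hp hpq (X ω)

-- Lyapunov
lemma lyapunov [IsProbabilityMeasure μ] {q p : ℝ} (hp : 0 ≤ p) (hpq : p ≤ q) (hq : 0 < q)
    {X : Ω → ℝ} (hX : Measurable X) (hXq : Integrable (fun ω => |X ω| ^ q) μ) :
    ∫ ω, |X ω| ^ p ∂μ ≤ (∫ ω, |X ω| ^ q ∂μ) ^ (p / q) := by
  rcases eq_or_lt_of_le hp with hp0 | hp0
  · simp [← hp0]
  rcases eq_or_lt_of_le hpq with hpq0 | hpq0
  · subst hpq0
    rw [div_self (ne_of_gt hq), Real.rpow_one]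
  -- 0 < p < q
  have hu : (1:ℝ) < q / p := (one_lt_div hp0).2 hpq0
  have hconj : (q/p).HolderConjugate ((q/p) / (q/p - 1)) :=
    Real.HolderConjugate.conjExponent hu
  have hXmem : MemLp X (ENNReal.ofReal q) μ := by
    rw [← memLp_norm_rpow_iff (hX.aestronglyMeasurable) (by simp [hq] : ENNReal.ofReal q ≠ 0)
      ENNReal.ofReal_ne_top]
    rw [ENNReal.div_self (by simp [hq]) ENNReal.ofReal_ne_top]
    rw [memLp_one_iff_integrable]
    have : (fun x => ‖X x‖ ^ (ENNReal.ofReal q).toReal) = fun ω => |X ω| ^ q := by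
      funext ω; rw [ENNReal.toReal_ofReal (le_of_lt hq), Real.norm_eq_abs]
    rw [this]
    exact hXq
  have hfmem : MemLp (fun ω => |X ω| ^ p) (ENNReal.ofReal (q/p)) μ := by
    have h0 : ENNReal.ofReal (q/p) = ENNReal.ofReal q / ENNReal.ofReal p := by
      rw [← ENNReal.ofReal_div_of_pos hp0]
    rw [h0]
    have := (memLp_norm_rpow_iff (q := ENNReal.ofReal p) (hX.aestronglyMeasurable)
      (by simp [hp0] : ENNReal.ofReal p ≠ 0) ENNReal.ofReal_ne_top).2 hXmem
    have heq : (fun x => ‖X x‖ ^ (ENNReal.ofReal p).toReal) = fun ω => |X ω| ^ p := by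
      funext ω; rw [ENNReal.toReal_ofReal (le_of_lt hp0), Real.norm_eq_abs]
    rwa [heq] at this
  have hgmem : MemLp (fun _ : Ω => (1:ℝ)) (ENNReal.ofReal ((q/p)/(q/p-1))) μ :=
    memLp_const 1
  have H := integral_mul_le_Lp_mul_Lq_of_nonneg hconj
    (Filter.Eventually.of_forall (fun ω => Real.rpow_nonneg (abs_nonneg _) _))
    (Filter.Eventually.of_forall (fun _ => zero_le_one))
    hfmem hgmem
  simp only [mul_one, Real.one_rpow, integral_const, Measure.real, measure_univ, ENNReal.toReal_one,
    smul_eq_mul] at H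
  have heq2 : (fun a => (|X a| ^ p) ^ (q/p)) = fun a => |X a| ^ q := by
    funext a
    rw [← Real.rpow_mul (abs_nonneg _)]
    congr 1
    field_simp
  rw [heq2, one_div_div] at H
  exact H

lemma sc_phi {q : ℝ} (hq : 1 ≤ q) (a : ℝ) : |q * a * |a| ^ (q-2)| ≤ q + q * |a| ^ q := by
  have hq0 : (0:ℝ) < q := lt_of_lt_of_le one_pos hq
  rcases eq_or_ne a 0 with ha | ha
  · simp [ha]
    positivity
  · have habs : |q * a * |a| ^ (q-2)| = q * |a| ^ (q-1) := by
      rw [abs_mul, abs_mul, abs_of_nonneg hq0.le,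
        abs_of_nonneg (Real.rpow_nonneg (abs_nonneg a) _)]
      have : |a| * |a| ^ (q-2) = |a| ^ (q-1) := by
        rw [mul_comm, ← Real.rpow_add_one (abs_ne_zero.mpr ha) (q-2)]
        congr 1; ring
      rw [mul_assoc, this]
    rw [habs]
    have := sc_mono (by linarith : (0:ℝ) ≤ q - 1) (by linarith : q - 1 ≤ q) a
    nlinarith

lemma step_ineq [IsProbabilityMeasure μ] {q r C : ℝ} (hq : 1 ≤ q) (hr : r = min q 2) (hC : 0 < C)
    (hA : ∀ a b : ℝ, |a+b| ^ q ≤ |a| ^ q + (q * a * |a| ^ (q-2)) * b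
      + C * (|a| ^ (q - r) * |b| ^ r + |b| ^ q))
    {X Y : Ω → ℝ} (hX : Measurable X) (hY : Measurable Y) (hind : IndepFun X Y μ)
    (hXq : Integrable (fun ω => |X ω| ^ q) μ) (hYq : Integrable (fun ω => |Y ω| ^ q) μ)
    (hY0 : ∫ ω, Y ω ∂μ = 0) :
    ∫ ω, |X ω + Y ω| ^ q ∂μ ≤ ∫ ω, |X ω| ^ q ∂μ
      + C * ((∫ ω, |X ω| ^ (q - r) ∂μ) * (∫ ω, |Y ω| ^ r ∂μ) + ∫ ω, |Y ω| ^ q ∂μ) := by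
  have hq0 : (0:ℝ) < q := lt_of_lt_of_le one_pos hq
  have hr1 : 1 ≤ r := by rw [hr]; exact le_min hq one_le_two
  have hrq : r ≤ q := by rw [hr]; exact min_le_left _ _
  set φ : ℝ → ℝ := fun x => q * x * |x| ^ (q-2) with hφ
  have hφm : Measurable φ := (measurable_const.mul measurable_id).mul
    (measurable_id.abs.pow_const _)
  have hφ1m : Measurable (fun x : ℝ => |x| ^ (q - r)) := measurable_id.abs.pow_const _
  have hψm : Measurable (fun x : ℝ => |x| ^ r) := measurable_id.abs.pow_const _
  -- integrabilities
  have iXY : Integrable (fun ω => |X ω + Y ω| ^ q) μ := by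
    refine Integrable.mono' ((hXq.add hYq).const_mul (2 ^ q))
      (((hX.add hY).abs.pow_const _).aestronglyMeasurable) ?_
    filter_upwards with ω
    rw [Real.norm_eq_abs, abs_of_nonneg (Real.rpow_nonneg (abs_nonneg _) _)]
    exact sc_add hq0.le (X ω) (Y ω)
  have iXqr : Integrable (fun ω => |X ω| ^ (q - r)) μ :=
    int_mono (by linarith) (by linarith) hX hXq
  have iYr : Integrable (fun ω => |Y ω| ^ r) μ := int_mono (by linarith) hrq hY hYq
  have iY : Integrable Y μ := by
    refine Integrable.mono' ((integrable_const 1).add hYq) hY.aestronglyMeasurable ?_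
    filter_upwards with ω
    rw [Real.norm_eq_abs]
    have := sc_mono (zero_le_one) hq (Y ω)
    rwa [Real.rpow_one] at this
  have iφX : Integrable (fun ω => φ (X ω)) μ := by
    refine Integrable.mono' ((integrable_const q).add (hXq.const_mul q))
      ((hφm.comp hX).aestronglyMeasurable) ?_
    filter_upwards with ω
    rw [Real.norm_eq_abs]
    exact sc_phi hq (X ω)
  have hind1 : IndepFun (fun ω => φ (X ω)) Y μ := hind.comp hφm measurable_id
  have hind2 : IndepFun (fun ω => |X ω| ^ (q - r)) (fun ω => |Y ω| ^ r) μ :=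
    hind.comp hφ1m hψm
  have iprod1 : Integrable (fun ω => φ (X ω) * Y ω) μ := hind1.integrable_mul iφX iY
  have iprod2 : Integrable (fun ω => |X ω| ^ (q - r) * |Y ω| ^ r) μ :=
    hind2.integrable_mul iXqr iYr
  have eprod1 : ∫ ω, φ (X ω) * Y ω ∂μ = (∫ ω, φ (X ω) ∂μ) * ∫ ω, Y ω ∂μ :=
    hind1.integral_fun_mul_eq_mul_integral iφX.aestronglyMeasurable iY.aestronglyMeasurable
  have eprod2 : ∫ ω, |X ω| ^ (q - r) * |Y ω| ^ r ∂μ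
      = (∫ ω, |X ω| ^ (q - r) ∂μ) * ∫ ω, |Y ω| ^ r ∂μ :=
    hind2.integral_fun_mul_eq_mul_integral iXqr.aestronglyMeasurable iYr.aestronglyMeasurable
  have hmono : ∫ ω, |X ω + Y ω| ^ q ∂μ ≤
      ∫ ω, (|X ω| ^ q + φ (X ω) * Y ω
        + C * (|X ω| ^ (q - r) * |Y ω| ^ r + |Y ω| ^ q)) ∂μ := by
    refine integral_mono iXY ?_ (fun ω => hA (X ω) (Y ω))
    exact (hXq.add iprod1).add ((iprod2.add hYq).const_mul C)
  have i1 : Integrable (fun ω => |X ω| ^ q + φ (X ω) * Y ω) μ := by exact hXq.add iprod1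
  have i2 : Integrable (fun ω => C * (|X ω| ^ (q - r) * |Y ω| ^ r + |Y ω| ^ q)) μ := by
    exact (iprod2.add hYq).const_mul C
  rw [integral_add i1 i2, integral_add hXq iprod1, integral_const_mul C _,
    integral_add iprod2 hYq, eprod1, eprod2, hY0, mul_zero, add_zero] at hmono
  exact hmono

lemma bern {p : ℝ} (hp : 1 ≤ p) (n : ℕ) :
    (n:ℝ) ^ p + (1/2) * (n:ℝ) ^ (p-1) + 1/2 ≤ ((n:ℝ)+1) ^ p := by
  have hp0 : (0:ℝ) < p := lt_of_lt_of_le one_pos hp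
  rcases Nat.eq_zero_or_pos n with h0 | hpos
  · subst h0
    simp only [Nat.cast_zero, zero_add, Real.one_rpow]
    rw [Real.zero_rpow (ne_of_gt hp0)]
    rcases eq_or_lt_of_le hp with h1 | h1
    · rw [← h1]; norm_num
    · rw [Real.zero_rpow (by linarith : p - 1 ≠ 0)]; norm_num
  · have hn1 : (1:ℝ) ≤ (n:ℝ) := by exact_mod_cast hpos
    have hn0 : (0:ℝ) < (n:ℝ) := by linarith
    have hb : 1 + p * (1/(n:ℝ)) ≤ (1 + 1/(n:ℝ)) ^ p :=
      one_add_mul_self_le_rpow_one_add (le_trans (by norm_num : (-1:ℝ) ≤ 0) (by positivity)) hp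
    have hmul : ((n:ℝ)+1) ^ p = (n:ℝ) ^ p * (1 + 1/(n:ℝ)) ^ p := by
      rw [← Real.mul_rpow hn0.le (by positivity)]
      congr 1; field_simp
    have hpow : (n:ℝ) ^ p * (1/(n:ℝ)) = (n:ℝ) ^ (p-1) := by
      rw [Real.rpow_sub hn0, Real.rpow_one]; field_simp
    have h1 : (1:ℝ) ≤ (n:ℝ) ^ (p-1) := by
      have := Real.rpow_le_rpow_of_exponent_le hn1 (by linarith : (0:ℝ) ≤ p - 1)
      rwa [Real.rpow_zero] at this
    have hnp0 : (0:ℝ) < (n:ℝ) ^ p := Real.rpow_pos_of_pos hn0 _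
    have h2 : (n:ℝ) ^ p + p * (n:ℝ) ^ (p-1) ≤ ((n:ℝ)+1) ^ p := by
      rw [hmul]
      have := mul_le_mul_of_nonneg_left hb hnp0.le
      calc (n:ℝ) ^ p + p * (n:ℝ) ^ (p-1)
          = (n:ℝ) ^ p * (1 + p * (1/(n:ℝ))) := by rw [mul_add, mul_one, ← mul_assoc,
            mul_comm ((n:ℝ)^p) p, mul_assoc, hpow]
        _ ≤ (n:ℝ) ^ p * (1 + 1/(n:ℝ)) ^ p := this
    nlinarith [h1, h2, hp]

lemma arith_step {q r C K a b : ℝ} (hq : 1 ≤ q) (hr1 : 1 ≤ r) (hrq : r ≤ q)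
    (hC : 0 < C) (hK : K = (2*C+2) ^ (q/r)) (hb : 0 ≤ b) (ha0 : 0 ≤ a) (n : ℕ)
    (ha : a ≤ K * (n:ℝ) ^ (q/r) * b) :
    a + C * (a ^ ((q-r)/q) * b ^ (r/q) + b) ≤ K * ((n:ℝ)+1) ^ (q/r) * b := by
  have hr0 : (0:ℝ) < r := lt_of_lt_of_le one_pos hr1
  have hq0 : (0:ℝ) < q := lt_of_lt_of_le one_pos hq
  set p : ℝ := q / r with hp
  have hp1 : 1 ≤ p := (one_le_div hr0).2 hrq
  have hp0 : 0 < p := lt_of_lt_of_le one_pos hp1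
  have hbase : (1:ℝ) ≤ 2*C+2 := by linarith
  have hbase0 : (0:ℝ) < 2*C+2 := by linarith
  have hKpos : 0 < K := by rw [hK]; exact Real.rpow_pos_of_pos hbase0 _
  have hK1 : 2*C+2 ≤ K := by
    rw [hK]
    calc 2*C+2 = (2*C+2) ^ (1:ℝ) := (Real.rpow_one _).symm
      _ ≤ (2*C+2) ^ p := Real.rpow_le_rpow_of_exponent_le hbase hp1
  set β : ℝ := (q-r)/q with hβ
  have hβ0 : 0 ≤ β := div_nonneg (by linarith) hq0.le
  have hβ1 : β + r/q = 1 := by rw [hβ]; field_simp; ring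
  have hKβ : K ^ β * (2*C+2) = K := by
    have h1 : K ^ β * K ^ (r/q) = K := by
      rw [← Real.rpow_add hKpos, hβ1, Real.rpow_one]
    have h2 : K ^ (r/q) = 2*C+2 := by
      rw [hK, ← Real.rpow_mul hbase0.le]
      have : p * (r/q) = 1 := by rw [hp]; field_simp
      rw [this, Real.rpow_one]
    rw [h2] at h1; exact h1
  have hKβ0 : 0 ≤ K ^ β := (Real.rpow_pos_of_pos hKpos _).le
  -- bound the middle term
  have hmid : a ^ β * b ^ (r/q) ≤ K ^ β * (n:ℝ) ^ (p - 1) * b := by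
    have hnn : (0:ℝ) ≤ (n:ℝ) ^ p := Real.rpow_nonneg (Nat.cast_nonneg n) _
    have h1 : a ^ β ≤ (K * (n:ℝ) ^ p * b) ^ β := Real.rpow_le_rpow ha0 ha hβ0
    have h2 : (K * (n:ℝ) ^ p * b) ^ β = K ^ β * ((n:ℝ) ^ p) ^ β * b ^ β := by
      rw [Real.mul_rpow (mul_nonneg hKpos.le hnn) hb, Real.mul_rpow hKpos.le hnn]
    have h3 : ((n:ℝ) ^ p) ^ β = (n:ℝ) ^ (p - 1) := by
      rw [← Real.rpow_mul (Nat.cast_nonneg n)]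
      congr 1
      rw [hp, hβ]; field_simp
    have h4 : b ^ β * b ^ (r/q) = b := by
      rw [← Real.rpow_add' hb (by rw [hβ1]; norm_num), hβ1, Real.rpow_one]
    have hbr0 : (0:ℝ) ≤ b ^ (r/q) := Real.rpow_nonneg hb _
    calc a ^ β * b ^ (r/q) ≤ (K * (n:ℝ) ^ p * b) ^ β * b ^ (r/q) :=
          mul_le_mul_of_nonneg_right h1 hbr0
      _ = K ^ β * ((n:ℝ) ^ p) ^ β * (b ^ β * b ^ (r/q)) := by rw [h2]; ring
      _ = K ^ β * (n:ℝ) ^ (p - 1) * b := by rw [h3, h4]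
  -- combine
  have hCK : C * K ^ β ≤ K / 2 := by nlinarith [hKβ0]
  have hCK2 : C ≤ K / 2 := by linarith
  have hkey := bern hp1 n
  have hn1p : (0:ℝ) ≤ (n:ℝ) ^ (p-1) := Real.rpow_nonneg (Nat.cast_nonneg n) _
  have hnp : (0:ℝ) ≤ (n:ℝ) ^ p := Real.rpow_nonneg (Nat.cast_nonneg n) _
  have hfin : K * ((n:ℝ) ^ p + (1/2) * (n:ℝ) ^ (p-1) + 1/2) * b ≤ K * ((n:ℝ)+1) ^ p * b :=
    mul_le_mul_of_nonneg_right (mul_le_mul_of_nonneg_left hkey hKpos.le) hb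
  have hmid' : C * (a ^ β * b ^ (r/q)) ≤ C * (K ^ β * (n:ℝ) ^ (p-1) * b) :=
    mul_le_mul_of_nonneg_left hmid hC.le
  have e1 : C * (K ^ β * (n:ℝ) ^ (p-1) * b) = (C * K ^ β) * ((n:ℝ) ^ (p-1) * b) := by ring
  have e2 : (C * K ^ β) * ((n:ℝ) ^ (p-1) * b) ≤ (K/2) * ((n:ℝ) ^ (p-1) * b) :=
    mul_le_mul_of_nonneg_right hCK (mul_nonneg hn1p hb)
  have e3 : C * b ≤ (K/2) * b := mul_le_mul_of_nonneg_right hCK2 hb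
  nlinarith [hfin, hmid', e2, e3]

lemma int_addq {q : ℝ} (hq0 : 0 ≤ q) {X Y : Ω → ℝ} (hX : Measurable X) (hY : Measurable Y)
    (hXq : Integrable (fun ω => |X ω| ^ q) μ) (hYq : Integrable (fun ω => |Y ω| ^ q) μ) :
    Integrable (fun ω => |X ω + Y ω| ^ q) μ := by
  refine Integrable.mono' ((hXq.add hYq).const_mul (2 ^ q))
    (((hX.add hY).abs.pow_const _).aestronglyMeasurable) ?_
  filter_upwards with ω
  rw [Real.norm_eq_abs, abs_of_nonneg (Real.rpow_nonneg (abs_nonneg _) _)]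
  exact sc_add hq0 (X ω) (Y ω)

lemma sum_bound [IsProbabilityMeasure μ] {q r C K : ℝ} (hq : 1 ≤ q) (hr : r = min q 2)
    (hC : 0 < C)
    (hA : ∀ a b : ℝ, |a+b| ^ q ≤ |a| ^ q + (q * a * |a| ^ (q-2)) * b
      + C * (|a| ^ (q - r) * |b| ^ r + |b| ^ q))
    (hK : K = (2*C+2) ^ (q/r))
    {M : ℕ} (X : Fin M → Ω → ℝ) (hmeas : ∀ j, Measurable (X j))
    (hindep : iIndepFun X μ)
    (hint : ∀ j, Integrable (fun ω => |X j ω| ^ q) μ)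
    (h0 : ∀ j, ∫ ω, X j ω ∂μ = 0)
    {b : ℝ} (hb : 0 ≤ b) (hbq : ∀ j, ∫ ω, |X j ω| ^ q ∂μ ≤ b)
    (hbr : ∀ j, ∫ ω, |X j ω| ^ r ∂μ ≤ b ^ (r/q)) :
    ∀ s : Finset (Fin M),
      Integrable (fun ω => |∑ j ∈ s, X j ω| ^ q) μ ∧
      ∫ ω, |∑ j ∈ s, X j ω| ^ q ∂μ ≤ K * (s.card : ℝ) ^ (q/r) * b := by
  have hq0 : (0:ℝ) < q := lt_of_lt_of_le one_pos hq
  have hr1 : 1 ≤ r := by rw [hr]; exact le_min hq one_le_two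
  have hrq : r ≤ q := by rw [hr]; exact min_le_left _ _
  intro s
  induction s using Finset.induction_on with
  | empty =>
    constructor
    · simpa [Real.zero_rpow (ne_of_gt hq0)] using integrable_const (0:ℝ)
    · simp [Real.zero_rpow (ne_of_gt hq0),
        Real.zero_rpow (ne_of_gt (div_pos hq0 (by linarith : (0:ℝ) < r)))]
  | @insert i s hnotmem ih =>
    have hSmeas : Measurable (fun ω => ∑ j ∈ s, X j ω) := by
      exact Finset.measurable_sum s (fun j _ => hmeas j)
    have hind : IndepFun (fun ω => ∑ j ∈ s, X j ω) (X i) μ := by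
      have := hindep.indepFun_finsetSum_of_notMem hmeas hnotmem
      convert this using 1
      funext ω
      simp [Finset.sum_apply]
    have hintS := ih.1
    set a : ℝ := ∫ ω, |∑ j ∈ s, X j ω| ^ q ∂μ with haa
    have ha0 : 0 ≤ a := integral_nonneg (fun ω => Real.rpow_nonneg (abs_nonneg _) _)
    have hlyap : ∫ ω, |∑ j ∈ s, X j ω| ^ (q - r) ∂μ ≤ a ^ ((q-r)/q) :=
      lyapunov (by linarith) (by linarith) hq0 hSmeas hintS
    have hstep := step_ineq hq hr hC hA hSmeas (hmeas i) hind hintS (hint i) (h0 i)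
    have hXr0 : 0 ≤ ∫ ω, |X i ω| ^ r ∂μ :=
      integral_nonneg (fun ω => Real.rpow_nonneg (abs_nonneg _) _)
    have hprod : (∫ ω, |∑ j ∈ s, X j ω| ^ (q - r) ∂μ) * (∫ ω, |X i ω| ^ r ∂μ)
        ≤ a ^ ((q-r)/q) * b ^ (r/q) :=
      mul_le_mul hlyap (hbr i) hXr0 (Real.rpow_nonneg ha0 _)
    have hbound : ∫ ω, |(∑ j ∈ s, X j ω) + X i ω| ^ q ∂μ
        ≤ a + C * (a ^ ((q-r)/q) * b ^ (r/q) + b) := by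
      have := hbq i
      nlinarith [hstep, hprod, hC]
    have harith := arith_step hq hr1 hrq hC hK hb ha0 s.card ih.2
    have hcard : ((insert i s).card : ℝ) = (s.card : ℝ) + 1 := by
      rw [Finset.card_insert_of_notMem hnotmem]; push_cast; ring
    have hsum : ∀ ω, ∑ j ∈ insert i s, X j ω = (∑ j ∈ s, X j ω) + X i ω := by
      intro ω; rw [Finset.sum_insert hnotmem]; ring
    constructor
    · have := int_addq (μ := μ) hq0.le hSmeas (hmeas i) hintS (hint i)
      refine this.congr ?_
      filter_upwards with ω
      rw [hsum ω]
    · calc ∫ ω, |∑ j ∈ insert i s, X j ω| ^ q ∂μ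
          = ∫ ω, |(∑ j ∈ s, X j ω) + X i ω| ^ q ∂μ := by
            congr 1; funext ω; rw [hsum ω]
        _ ≤ a + C * (a ^ ((q-r)/q) * b ^ (r/q) + b) := hbound
        _ ≤ K * ((s.card : ℝ) + 1) ^ (q/r) * b := harith
        _ = K * ((insert i s).card : ℝ) ^ (q/r) * b := by rw [hcard]

end auxlemmas



theorem stmt8 (q s : ℝ) (hs : s ∈ Set.Icc (1:ℝ) 2) (hq : s ≤ q) :
    ∃ Θ : ℝ, 0 < Θ ∧
      ∀ (Ω : Type) (_ : MeasurableSpace Ω) (μ : Measure Ω),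
        IsProbabilityMeasure μ →
        ∀ (M : ℕ) (hM : 0 < M) (ξ : Fin M → Ω → ℝ),
          (∀ j, Measurable (ξ j)) →
          iIndepFun ξ μ →
          (∀ j, Measure.map (ξ j) μ = Measure.map (ξ ⟨0, hM⟩) μ) →
          (∀ j, Integrable (ξ j) μ) →
          Integrable (fun ω => |ξ ⟨0, hM⟩ ω| ^ q) μ →
          (∫ ω, |(∫ ω', ξ ⟨0, hM⟩ ω' ∂μ) - (1 / (M:ℝ)) * ∑ j, ξ j ω| ^ q ∂μ) ^ (1/q)
            ≤ Θ / (M : ℝ) ^ (1 - 1/s) *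
              (∫ ω, |ξ ⟨0, hM⟩ ω - ∫ ω', ξ ⟨0, hM⟩ ω' ∂μ| ^ q ∂μ) ^ (1/q) := by
  obtain ⟨hs1, hs2⟩ := hs
  have hq1 : (1:ℝ) ≤ q := hs1.trans hq
  have hq0 : (0:ℝ) < q := lt_of_lt_of_le one_pos hq1
  obtain ⟨C, hC, hA⟩ := lemA hq1
  set r : ℝ := min q 2 with hr
  have hr1 : 1 ≤ r := le_min hq1 one_le_two
  have hr0 : (0:ℝ) < r := lt_of_lt_of_le one_pos hr1
  have hrq : r ≤ q := min_le_left _ _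
  have hsr : s ≤ r := le_min hq hs2
  set K : ℝ := (2*C+2) ^ (q/r) with hK
  have hKpos : 0 < K := Real.rpow_pos_of_pos (by linarith) _
  refine ⟨K ^ (1/q), Real.rpow_pos_of_pos hKpos _, ?_⟩
  intro Ω mΩ μ hprob M hM ξ hmeas hindep hident hintξ hintq
  set Θ : ℝ := K ^ (1/q) with hΘ
  have hΘ0 : 0 < Θ := Real.rpow_pos_of_pos hKpos _
  set j0 : Fin M := ⟨0, hM⟩ with hj0
  set m : ℝ := ∫ ω', ξ j0 ω' ∂μ with hm
  -- transfer integrals across identical distributions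
  have key : ∀ (g : ℝ → ℝ), Measurable g → ∀ j : Fin M,
      ∫ ω, g (ξ j ω) ∂μ = ∫ ω, g (ξ j0 ω) ∂μ := by
    intro g hg j
    rw [← integral_map (hmeas j).aemeasurable hg.aestronglyMeasurable,
      ← integral_map (hmeas j0).aemeasurable hg.aestronglyMeasurable, hident j]
  have keyInt : ∀ (g : ℝ → ℝ), Measurable g →
      Integrable (fun ω => g (ξ j0 ω)) μ → ∀ j : Fin M,
      Integrable (fun ω => g (ξ j ω)) μ := by
    intro g hg hgi j
    have h1 : Integrable g (Measure.map (ξ j0) μ) := by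
      rw [integrable_map_measure hg.aestronglyMeasurable (hmeas j0).aemeasurable]
      exact hgi
    rw [← hident j] at h1
    rw [integrable_map_measure hg.aestronglyMeasurable (hmeas j).aemeasurable] at h1
    exact h1
  -- centered variables
  set X : Fin M → Ω → ℝ := fun j ω => ξ j ω - m with hX
  have hXmeas : ∀ j, Measurable (X j) := fun j => (hmeas j).sub measurable_const
  have hXindep : iIndepFun X μ := by
    have := hindep.comp (fun _ => fun x : ℝ => x - m)
      (fun _ => measurable_id.sub measurable_const)
    exact this
  have hintq_all : ∀ j, Integrable (fun ω => |ξ j ω| ^ q) μ :=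
    keyInt (fun x => |x| ^ q) (measurable_id.abs.pow_const q) hintq
  have hXq_int : ∀ j, Integrable (fun ω => |X j ω| ^ q) μ := by
    intro j
    have := int_addq (μ := μ) hq0.le (hmeas j) (measurable_const : Measurable (fun _ : Ω => -m))
      (hintq_all j) (integrable_const _)
    refine this.congr ?_
    filter_upwards with ω
    rw [hX]; ring_nf
  have hX0 : ∀ j, ∫ ω, X j ω ∂μ = 0 := by
    intro j
    have hj : ∫ ω, ξ j ω ∂μ = m := key id measurable_id j
    rw [hX]
    simp only
    rw [integral_sub (hintξ j) (integrable_const m), hj, integral_const]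
    simp
  set b : ℝ := ∫ ω, |ξ j0 ω - m| ^ q ∂μ with hb
  have hb0 : 0 ≤ b := integral_nonneg (fun ω => Real.rpow_nonneg (abs_nonneg _) _)
  have hbq : ∀ j, ∫ ω, |X j ω| ^ q ∂μ ≤ b := by
    intro j
    have := key (fun x => |x - m| ^ q) ((measurable_id.sub measurable_const).abs.pow_const q) j
    exact le_of_eq this
  have hbr : ∀ j, ∫ ω, |X j ω| ^ r ∂μ ≤ b ^ (r/q) := by
    intro j
    have h1 := key (fun x => |x - m| ^ r) ((measurable_id.sub measurable_const).abs.pow_const r) j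
    rw [show (fun ω => |X j ω| ^ r) = fun ω => |ξ j ω - m| ^ r from rfl, h1]
    have h2 := lyapunov (μ := μ) (le_of_lt hr0) hrq hq0 (hXmeas j0) (hXq_int j0)
    exact h2
  have hsum := (sum_bound hq1 hr hC hA hK X hXmeas hXindep hXq_int hX0 hb0 hbq hbr
    Finset.univ).2
  rw [Finset.card_univ, Fintype.card_fin] at hsum
  -- rewrite the LHS integrand
  have hMpos : (0:ℝ) < (M:ℝ) := by exact_mod_cast hM
  have hM1 : (1:ℝ) ≤ (M:ℝ) := by exact_mod_cast hM
  have hrw : (fun ω => |m - (1 / (M:ℝ)) * ∑ j, ξ j ω| ^ q)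
      = fun ω => ((1:ℝ)/(M:ℝ)) ^ q * |∑ j, X j ω| ^ q := by
    funext ω
    have h1 : m - (1 / (M:ℝ)) * ∑ j, ξ j ω = -(1/(M:ℝ)) * ∑ j, X j ω := by
      have hsumX : ∑ j, X j ω = (∑ j, ξ j ω) - M * m := by
        rw [hX]
        simp only
        rw [Finset.sum_sub_distrib, Finset.sum_const, Finset.card_univ, Fintype.card_fin]
        simp [nsmul_eq_mul]
      rw [hsumX]
      field_simp
      ring
    rw [h1, abs_mul, Real.mul_rpow (abs_nonneg _) (abs_nonneg _)]
    congr 2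
    rw [abs_neg, abs_of_pos (by positivity : (0:ℝ) < 1/(M:ℝ))]
  rw [hrw]
  rw [integral_const_mul]
  set I : ℝ := ∫ ω, |∑ j, X j ω| ^ q ∂μ with hI
  have hI0 : 0 ≤ I := integral_nonneg (fun ω => Real.rpow_nonneg (abs_nonneg _) _)
  have hm0 : (0:ℝ) ≤ (1/(M:ℝ)) ^ q := Real.rpow_nonneg (by positivity) _
  have hstep1 : ((1/(M:ℝ)) ^ q * I) ^ (1/q) ≤ ((1/(M:ℝ)) ^ q * (K * (M:ℝ) ^ (q/r) * b)) ^ (1/q) :=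
    Real.rpow_le_rpow (mul_nonneg hm0 hI0) (mul_le_mul_of_nonneg_left hsum hm0)
      (by positivity)
  have hstep2 : ((1/(M:ℝ)) ^ q * (K * (M:ℝ) ^ (q/r) * b)) ^ (1/q)
      = (1/(M:ℝ)) * (Θ * (M:ℝ) ^ (1/r) * b ^ (1/q)) := by
    have hMq0 : (0:ℝ) ≤ (M:ℝ) ^ (q/r) := Real.rpow_nonneg hMpos.le _
    rw [Real.mul_rpow hm0 (by positivity), Real.mul_rpow (by positivity) hb0,
      Real.mul_rpow hKpos.le hMq0]
    rw [← Real.rpow_mul (by positivity : (0:ℝ) ≤ 1/(M:ℝ)),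
      ← Real.rpow_mul hMpos.le]
    rw [mul_one_div_cancel (ne_of_gt hq0), Real.rpow_one]
    rw [show q/r * (1/q) = 1/r by field_simp]
  have hstep3 : (1/(M:ℝ)) * (Θ * (M:ℝ) ^ (1/r) * b ^ (1/q))
      ≤ Θ / (M:ℝ) ^ (1 - 1/s) * b ^ (1/q) := by
    have hrs : (M:ℝ) ^ (1/r) ≤ (M:ℝ) ^ (1/s) := by
      apply Real.rpow_le_rpow_of_exponent_le hM1
      apply one_div_le_one_div_of_le (by linarith) hsr
    have hdiv : Θ / (M:ℝ) ^ (1 - 1/s) = Θ * (M:ℝ) ^ (1/s - 1) := by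
      rw [div_eq_mul_inv, ← Real.rpow_neg hMpos.le]
      congr 1
      ring_nf
    rw [hdiv]
    have he : (M:ℝ) ^ ((1:ℝ)/s - 1) = (1/(M:ℝ)) * (M:ℝ) ^ (1/s) := by
      rw [Real.rpow_sub hMpos, Real.rpow_one]
      ring
    rw [he]
    have hbq0 : 0 ≤ b ^ (1/q) := Real.rpow_nonneg hb0 _
    calc (1/(M:ℝ)) * (Θ * (M:ℝ) ^ (1/r) * b ^ (1/q))
        ≤ (1/(M:ℝ)) * (Θ * (M:ℝ) ^ (1/s) * b ^ (1/q)) := by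
          apply mul_le_mul_of_nonneg_left _ (by positivity : (0:ℝ) ≤ 1/(M:ℝ))
          apply mul_le_mul_of_nonneg_right _ hbq0
          exact mul_le_mul_of_nonneg_left hrs hΘ0.le
      _ = Θ * ((1/(M:ℝ)) * (M:ℝ) ^ (1/s)) * b ^ (1/q) := by ring
  calc ((1/(M:ℝ)) ^ q * I) ^ (1/q)
      ≤ ((1/(M:ℝ)) ^ q * (K * (M:ℝ) ^ (q/r) * b)) ^ (1/q) := hstep1
    _ = (1/(M:ℝ)) * (Θ * (M:ℝ) ^ (1/r) * b ^ (1/q)) := hstep2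
    _ ≤ Θ / (M:ℝ) ^ (1 - 1/s) * b ^ (1/q) := hstep3
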